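/- Suppose for each (i,j) the vertical scaling function s_{ij} : E_{ij} → R vanishes on ∂E_{ij} and the boundary-matching conditions on h_{ij} hold. Then for any φ ∈ C(E), the piecewise-defined function Tφ given on each E_{ij} by (Tφ)(x,y) = s_{ij}(x,y)·(φ(L_{ij}⁻¹(x,y)) − g_{ij}(L_{ij}⁻¹(x,y))) + h_{ij}(x,y) is well-defined and continuous on E, i.e. the definitions agree on the shared edges of adjacent subrectangles. -/

import Mathlib

open Set

/-- The piecewise definition of `Tφ` on the subrectangles `E_{ij}` is
well-defined (the formulas agree on shared edges) and yields a continuous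
function on `E`. -/
theorem T_welldefined_continuous (n m : ℕ) (hn : 0 < n) (hm : 0 < m)
    (x : Fin (n + 1) → ℝ) (y : Fin (m + 1) → ℝ)
    (hx : StrictMono x) (hy : StrictMono y)
    (z : Fin (n + 1) → Fin (m + 1) → ℝ)
    -- the horizontal and vertical contraction homeomorphisms and their inverses
    (Lx Lx' : Fin n → ℝ → ℝ) (Ly Ly' : Fin m → ℝ → ℝ)
    (hLxmap : ∀ i, MapsTo (Lx i) (Icc (x 0) (x (Fin.last n)))
      (Icc (x i.castSucc) (x i.succ)))
    (hLx'map : ∀ i, MapsTo (Lx' i) (Icc (x i.castSucc) (x i.succ))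
      (Icc (x 0) (x (Fin.last n))))
    (hLxinv : ∀ i, ∀ t ∈ Icc (x 0) (x (Fin.last n)), Lx' i (Lx i t) = t)
    (hLxinv' : ∀ i, ∀ t ∈ Icc (x i.castSucc) (x i.succ), Lx i (Lx' i t) = t)
    (hLxcont : ∀ i, ContinuousOn (Lx i) (Icc (x 0) (x (Fin.last n))))
    (hLx'cont : ∀ i, ContinuousOn (Lx' i) (Icc (x i.castSucc) (x i.succ)))
    (hLxcontr : ∀ i, ∃ c : ℝ, c < 1 ∧ ∀ t ∈ Icc (x 0) (x (Fin.last n)),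
      ∀ t' ∈ Icc (x 0) (x (Fin.last n)), |Lx i t - Lx i t'| ≤ c * |t - t'|)
    (hLxend : ∀ i, (Lx i (x 0) = x i.castSucc ∧ Lx i (x (Fin.last n)) = x i.succ) ∨
      (Lx i (x 0) = x i.succ ∧ Lx i (x (Fin.last n)) = x i.castSucc))
    (hLymap : ∀ j, MapsTo (Ly j) (Icc (y 0) (y (Fin.last m)))
      (Icc (y j.castSucc) (y j.succ)))
    (hLy'map : ∀ j, MapsTo (Ly' j) (Icc (y j.castSucc) (y j.succ))
      (Icc (y 0) (y (Fin.last m))))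
    (hLyinv : ∀ j, ∀ t ∈ Icc (y 0) (y (Fin.last m)), Ly' j (Ly j t) = t)
    (hLyinv' : ∀ j, ∀ t ∈ Icc (y j.castSucc) (y j.succ), Ly j (Ly' j t) = t)
    (hLycont : ∀ j, ContinuousOn (Ly j) (Icc (y 0) (y (Fin.last m))))
    (hLy'cont : ∀ j, ContinuousOn (Ly' j) (Icc (y j.castSucc) (y j.succ)))
    (hLycontr : ∀ j, ∃ c : ℝ, c < 1 ∧ ∀ t ∈ Icc (y 0) (y (Fin.last m)),
      ∀ t' ∈ Icc (y 0) (y (Fin.last m)), |Ly j t - Ly j t'| ≤ c * |t - t'|)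
    (hLyend : ∀ j, (Ly j (y 0) = y j.castSucc ∧ Ly j (y (Fin.last m)) = y j.succ) ∨
      (Ly j (y 0) = y j.succ ∧ Ly j (y (Fin.last m)) = y j.castSucc))
    -- vertical scaling factors, Lipschitz, |s| < 1, vanishing on ∂E_{ij}
    (s : Fin n → Fin m → ℝ × ℝ → ℝ)
    (hslip : ∀ i j, ∃ K : NNReal, LipschitzOnWith K (s i j)
      (Icc (x i.castSucc) (x i.succ) ×ˢ Icc (y j.castSucc) (y j.succ)))
    (hs1 : ∀ i j, ∀ p ∈ Icc (x i.castSucc) (x i.succ) ×ˢ Icc (y j.castSucc) (y j.succ),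
      |s i j p| < 1)
    (hsbdx : ∀ i j, ∀ b ∈ Icc (y j.castSucc) (y j.succ),
      s i j (x i.castSucc, b) = 0 ∧ s i j (x i.succ, b) = 0)
    (hsbdy : ∀ i j, ∀ a ∈ Icc (x i.castSucc) (x i.succ),
      s i j (a, y j.castSucc) = 0 ∧ s i j (a, y j.succ) = 0)
    -- the Lipschitz functions g_{ij} on E
    (g : Fin n → Fin m → ℝ × ℝ → ℝ)
    (hglip : ∀ i j, ∃ K : NNReal, LipschitzOnWith K (g i j)
      (Icc (x 0) (x (Fin.last n)) ×ˢ Icc (y 0) (y (Fin.last m))))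
    -- interpolation curves q_α, r_β of the column/row data
    (q : Fin (n + 1) → ℝ → ℝ) (r : Fin (m + 1) → ℝ → ℝ)
    (hqcont : ∀ α, ContinuousOn (q α) (Icc (y 0) (y (Fin.last m))))
    (hrcont : ∀ β, ContinuousOn (r β) (Icc (x 0) (x (Fin.last n))))
    (hqdata : ∀ α β, q α (y β) = z α β) (hrdata : ∀ α β, r β (x α) = z α β)
    -- the Lipschitz functions h_{ij} with prescribed boundary curves
    (h : Fin n → Fin m → ℝ × ℝ → ℝ)
    (hhlip : ∀ i j, ∃ K : NNReal, LipschitzOnWith K (h i j)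
      (Icc (x i.castSucc) (x i.succ) ×ˢ Icc (y j.castSucc) (y j.succ)))
    (hhq : ∀ i j, ∀ b ∈ Icc (y j.castSucc) (y j.succ),
      h i j (x i.castSucc, b) = q i.castSucc b ∧ h i j (x i.succ, b) = q i.succ b)
    (hhr : ∀ i j, ∀ a ∈ Icc (x i.castSucc) (x i.succ),
      h i j (a, y j.castSucc) = r j.castSucc a ∧ h i j (a, y j.succ) = r j.succ a)
    -- a member φ of C(E)
    (φ : ℝ × ℝ → ℝ)
    (hφcont : ContinuousOn φ (Icc (x 0) (x (Fin.last n)) ×ˢ Icc (y 0) (y (Fin.last m))))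
    (hφq : ∀ α, ∀ b ∈ Icc (y 0) (y (Fin.last m)), φ (x α, b) = q α b)
    (hφr : ∀ β, ∀ a ∈ Icc (x 0) (x (Fin.last n)), φ (a, y β) = r β a) :
    ∃ Tφ : ℝ × ℝ → ℝ,
      ContinuousOn Tφ (Icc (x 0) (x (Fin.last n)) ×ˢ Icc (y 0) (y (Fin.last m))) ∧
      ∀ i j, ∀ p ∈ Icc (x i.castSucc) (x i.succ) ×ˢ Icc (y j.castSucc) (y j.succ),
        Tφ p = s i j p * (φ (Lx' i p.1, Ly' j p.2) - g i j (Lx' i p.1, Ly' j p.2)) +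
          h i j p := by
  classical
  -- abbreviations
  set Ex := Icc (x 0) (x (Fin.last n)) with hEx
  set Ey := Icc (y 0) (y (Fin.last m)) with hEy
  set R : Fin n → Fin m → Set (ℝ × ℝ) := fun i j =>
    Icc (x i.castSucc) (x i.succ) ×ˢ Icc (y j.castSucc) (y j.succ) with hRdef
  set F : Fin n → Fin m → ℝ × ℝ → ℝ := fun i j p =>
    s i j p * (φ (Lx' i p.1, Ly' j p.2) - g i j (Lx' i p.1, Ly' j p.2)) + h i j p with hFdef
  -- edge value lemmas
  have edgeXL : ∀ i j b, b ∈ Icc (y j.castSucc) (y j.succ) →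
      F i j (x i.castSucc, b) = q i.castSucc b := by
    intro i j b hb
    simp only [hFdef, (hsbdx i j b hb).1, (hhq i j b hb).1, zero_mul, zero_add]
  have edgeXR : ∀ i j b, b ∈ Icc (y j.castSucc) (y j.succ) →
      F i j (x i.succ, b) = q i.succ b := by
    intro i j b hb
    simp only [hFdef, (hsbdx i j b hb).2, (hhq i j b hb).2, zero_mul, zero_add]
  have edgeYB : ∀ i j a, a ∈ Icc (x i.castSucc) (x i.succ) →
      F i j (a, y j.castSucc) = r j.castSucc a := by
    intro i j a ha
    simp only [hFdef, (hsbdy i j a ha).1, (hhr i j a ha).1, zero_mul, zero_add]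
  have edgeYT : ∀ i j a, a ∈ Icc (x i.castSucc) (x i.succ) →
      F i j (a, y j.succ) = r j.succ a := by
    intro i j a ha
    simp only [hFdef, (hsbdy i j a ha).2, (hhr i j a ha).2, zero_mul, zero_add]
  -- overlapping intervals for distinct indices meet only at a shared endpoint
  have meet : ∀ (N : ℕ) (u : Fin (N + 1) → ℝ), StrictMono u → ∀ i i' : Fin N, i ≠ i' →
      ∀ a, a ∈ Icc (u i.castSucc) (u i.succ) → a ∈ Icc (u i'.castSucc) (u i'.succ) →
      (a = u i.succ ∧ i.succ = i'.castSucc) ∨ (a = u i'.succ ∧ i'.succ = i.castSucc) := by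
    intro N u hu i i' hne a ha ha'
    rcases lt_or_gt_of_ne hne with hlt | hlt
    · left
      have h1 : i.succ ≤ i'.castSucc := by
        have := (Fin.lt_def.mp hlt)
        rw [Fin.le_def]
        simp only [Fin.val_succ, Fin.coe_castSucc]
        omega
      have h2 : u i.succ ≤ u i'.castSucc := hu.monotone h1
      have h3 : a = u i.succ := le_antisymm ha.2 (le_trans h2 ha'.1)
      have h4 : u i.succ = u i'.castSucc := le_antisymm h2 (h3 ▸ ha'.1)
      exact ⟨h3, hu.injective h4⟩
    · right
      have h1 : i'.succ ≤ i.castSucc := by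
        have := (Fin.lt_def.mp hlt)
        rw [Fin.le_def]
        simp only [Fin.val_succ, Fin.coe_castSucc]
        omega
      have h2 : u i'.succ ≤ u i.castSucc := hu.monotone h1
      have h3 : a = u i'.succ := le_antisymm ha'.2 (le_trans h2 ha.1)
      have h4 : u i'.succ = u i.castSucc := le_antisymm h2 (h3 ▸ ha.1)
      exact ⟨h3, hu.injective h4⟩
  -- the formulas agree on overlaps
  have agree : ∀ i j i' j' p, p ∈ R i j → p ∈ R i' j' → F i j p = F i' j' p := by
    rintro i j i' j' ⟨a, b⟩ hp hp'
    by_cases hii : i = i'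
    · subst hii
      by_cases hjj : j = j'
      · subst hjj; rfl
      · rcases meet m y hy j j' hjj b hp.2 hp'.2 with ⟨hb, hidx⟩ | ⟨hb, hidx⟩
        · subst hb
          have e1 : F i j (a, y j.succ) = r j.succ a := edgeYT i j a hp.1
          have e2 : F i j' (a, y j.succ) = r j'.castSucc a := by
            rw [show y j.succ = y j'.castSucc from congrArg y hidx]
            exact edgeYB i j' a hp'.1
          rw [e1, e2, hidx]
        · subst hb
          have e1 : F i j (a, y j'.succ) = r j.castSucc a := by
            rw [show y j'.succ = y j.castSucc from congrArg y hidx]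
            exact edgeYB i j a hp.1
          have e2 : F i j' (a, y j'.succ) = r j'.succ a := edgeYT i j' a hp'.1
          rw [e1, e2, hidx]
    · rcases meet n x hx i i' hii a hp.1 hp'.1 with ⟨ha, hidx⟩ | ⟨ha, hidx⟩
      · subst ha
        have e1 : F i j (x i.succ, b) = q i.succ b := edgeXR i j b hp.2
        have e2 : F i' j' (x i.succ, b) = q i'.castSucc b := by
          rw [show x i.succ = x i'.castSucc from congrArg x hidx]
          exact edgeXL i' j' b hp'.2
        rw [e1, e2, hidx]
      · subst ha
        have e1 : F i j (x i'.succ, b) = q i.castSucc b := by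
          rw [show x i'.succ = x i.castSucc from congrArg x hidx]
          exact edgeXL i j b hp.2
        have e2 : F i' j' (x i'.succ, b) = q i'.succ b := edgeXR i' j' b hp'.2
        rw [e1, e2, hidx]
  -- every point of the big interval lies in a subinterval
  have coverAux : ∀ (N : ℕ), 0 < N → ∀ (u : Fin (N + 1) → ℝ), StrictMono u →
      ∀ a ∈ Icc (u 0) (u (Fin.last N)), ∃ i : Fin N, a ∈ Icc (u i.castSucc) (u i.succ) := by
    intro N hN u hu a ha
    set T : Finset (Fin (N + 1)) := Finset.univ.filter (fun k => u k ≤ a) with hT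
    have hne : T.Nonempty := ⟨0, by simp [hT, ha.1]⟩
    set k := T.max' hne with hk
    have hkmem : u k ≤ a := by
      have := T.max'_mem hne
      simp [hT] at this
      exact this
    by_cases hkN : (k : ℕ) < N
    · refine ⟨⟨(k : ℕ), hkN⟩, ?_, ?_⟩
      · have : (⟨(k : ℕ), hkN⟩ : Fin N).castSucc = k := by ext; simp
        rw [this]; exact hkmem
      · by_contra hc
        push_neg at hc
        have hmem : (⟨(k : ℕ), hkN⟩ : Fin N).succ ∈ T :=
          Finset.mem_filter.mpr ⟨Finset.mem_univ _, hc.le⟩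
        have hle := T.le_max' _ hmem
        rw [← hk] at hle
        have hcon := Fin.le_def.mp hle
        simp only [Fin.val_succ] at hcon
        omega
    · have hkl : k = Fin.last N := by
        ext; simp only [Fin.val_last]; omega
      have haeq : a = u (Fin.last N) := le_antisymm ha.2 (hkl ▸ hkmem)
      refine ⟨⟨N - 1, by omega⟩, ?_, ?_⟩
      · refine le_trans ?_ haeq.ge
        exact hu.monotone (Fin.le_last _)
      · have hsucc : (⟨N - 1, by omega⟩ : Fin N).succ = Fin.last N := by
          ext; simp only [Fin.val_succ, Fin.val_last]; omega
        rw [hsucc]; exact haeq.le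
  have hcover : Ex ×ˢ Ey = ⋃ c : Fin n × Fin m, R c.1 c.2 := by
    ext ⟨a, b⟩
    constructor
    · rintro ⟨ha, hb⟩
      obtain ⟨i, hi⟩ := coverAux n hn x hx a ha
      obtain ⟨j, hj⟩ := coverAux m hm y hy b hb
      exact mem_iUnion.2 ⟨(i, j), hi, hj⟩
    · intro hp
      obtain ⟨⟨i, j⟩, hij⟩ := mem_iUnion.1 hp
      exact ⟨⟨le_trans (hx.monotone (Fin.zero_le _)) hij.1.1,
          le_trans hij.1.2 (hx.monotone (Fin.le_last _))⟩,
        ⟨le_trans (hy.monotone (Fin.zero_le _)) hij.2.1,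
          le_trans hij.2.2 (hy.monotone (Fin.le_last _))⟩⟩
  -- the glued function
  set Tφ : ℝ × ℝ → ℝ := fun p =>
    if hp : ∃ c : Fin n × Fin m, p ∈ R c.1 c.2 then F hp.choose.1 hp.choose.2 p else 0
    with hTdef
  have hspec : ∀ i j, ∀ p ∈ R i j, Tφ p = F i j p := by
    intro i j p hp
    have hex : ∃ c : Fin n × Fin m, p ∈ R c.1 c.2 := ⟨(i, j), hp⟩
    simp only [hTdef, dif_pos hex]
    exact agree _ _ i j p hex.choose_spec hp
  refine ⟨Tφ, ?_, fun i j p hp => hspec i j p hp⟩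
  rw [hcover]
  apply LocallyFinite.continuousOn_iUnion (locallyFinite_of_finite _)
  · rintro ⟨i, j⟩
    exact isClosed_Icc.prod isClosed_Icc
  · rintro ⟨i, j⟩
    have hmapsto : MapsTo (fun p : ℝ × ℝ => (Lx' i p.1, Ly' j p.2)) (R i j) (Ex ×ˢ Ey) :=
      fun p hp => ⟨hLx'map i hp.1, hLy'map j hp.2⟩
    have hmcont : ContinuousOn (fun p : ℝ × ℝ => (Lx' i p.1, Ly' j p.2)) (R i j) :=
      ContinuousOn.prodMk ((hLx'cont i).comp continuousOn_fst fun p hp => hp.1)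
        ((hLy'cont j).comp continuousOn_snd fun p hp => hp.2)
    obtain ⟨Ks, hKs⟩ := hslip i j
    obtain ⟨Kg, hKg⟩ := hglip i j
    obtain ⟨Kh, hKh⟩ := hhlip i j
    have hFc : ContinuousOn (F i j) (R i j) :=
      (hKs.continuousOn.mul ((hφcont.comp hmcont hmapsto).sub
        (hKg.continuousOn.comp hmcont hmapsto))).add hKh.continuousOn
    exact hFc.congr (fun p hp => hspec i j p hp)
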